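/- Let u ≠ v with v reachable from u, and let q be any vertex lying on the lexicographically-first shortest path P(u, v) with q ≠ v. Then the suffix of P(u, v) starting at q equals P(q, v). -/

import Mathlib

/-- `L` is a directed walk from `u` to `v`: a nonempty list of vertices starting at `u`,
ending at `v`, with consecutive vertices joined by edges. Its number of edges is `L.length - 1`. -/
def IsWalk {V : Type} (E : V → V → Prop) (u v : V) (L : List V) : Prop :=
  L ≠ [] ∧ L.head? = some u ∧ L.getLast? = some v ∧ L.Chain' E

/-- A directed path: a walk with pairwise distinct vertices. -/
def IsPath {V : Type} (E : V → V → Prop) (u v : V) (L : List V) : Prop :=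
  IsWalk E u v L ∧ L.Nodup

/-- The weight of a walk: the sum of the weights of its consecutive edges
(the trivial walk has weight 0). -/
def walkWeight {V : Type} (w : V → V → ℝ) (L : List V) : ℝ :=
  ((L.zip L.tail).map fun e => w e.1 e.2).sum

/-- `v` is reachable from `u`. -/
def Reaches {V : Type} (E : V → V → Prop) (u v : V) : Prop :=
  ∃ L, IsWalk E u v L

/-- BFS level: the minimum number of edges of a directed walk from `s` to `v`. -/
noncomputable def level {V : Type} (E : V → V → Prop) (s v : V) : ℕ :=
  sInf {k | ∃ L, IsWalk E s v L ∧ L.length = k + 1}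

/-- `L` is the lexicographically-first shortest path from `u` to `v`: a minimum-weight
directed path from `u` to `v` whose reversed sequence of vertex indices is
lexicographically smallest among all minimum-weight directed paths from `u` to `v`. -/
def IsLexFirstSP {V : Type} (E : V → V → Prop) (w : V → V → ℝ) (idx : V → ℕ)
    (u v : V) (L : List V) : Prop :=
  IsPath E u v L ∧
  (∀ M, IsPath E u v M → walkWeight w L ≤ walkWeight w M) ∧
  (∀ M, IsPath E u v M → walkWeight w M = walkWeight w L →
    ¬ List.Lex (· < ·) (M.reverse.map idx) (L.reverse.map idx))

/-- `pdist E w u v` is the minimum weight `d(u, v)` of a directed path from `u` to `v`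
(for `v` reachable from `u`); in particular `pdist E w u u = 0`, the weight of the
trivial path. -/
noncomputable def pdist {V : Type} (E : V → V → Prop) (w : V → V → ℝ) (u v : V) : ℝ :=
  sInf {r : ℝ | ∃ L, IsPath E u v L ∧ walkWeight w L = r}

section Aux

variable {V : Type} {E : V → V → Prop} {w : V → V → ℝ} {idx : V → ℕ}

lemma walkWeight_cons_cons (w : V → V → ℝ) (a b : V) (l : List V) :
    walkWeight w (a :: b :: l) = w a b + walkWeight w (b :: l) := by
  simp [walkWeight]

lemma walkWeight_split (w : V → V → ℝ) :
    ∀ (A : List V) (q : V) (B : List V),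
      walkWeight w (A ++ q :: B) = walkWeight w (A ++ [q]) + walkWeight w (q :: B) := by
  intro A
  induction A with
  | nil => intro q B; simp [walkWeight]
  | cons a A ih =>
    intro q B
    cases A with
    | nil =>
      simp only [List.nil_append, List.cons_append, List.singleton_append]
      rw [walkWeight_cons_cons]
      simp [walkWeight]
    | cons a' A' =>
      have h1 : ((a :: a' :: A') ++ q :: B) = a :: ((a' :: A') ++ q :: B) := rfl
      have h2 : ((a :: a' :: A') ++ [q]) = a :: ((a' :: A') ++ [q]) := rfl
      rw [h1, h2]
      have h3 : ((a' :: A') ++ q :: B) = a' :: (A' ++ q :: B) := rfl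
      have h4 : ((a' :: A') ++ [q]) = a' :: (A' ++ [q]) := rfl
      rw [h3, h4, walkWeight_cons_cons, walkWeight_cons_cons, ← h3, ← h4, ih]
      ring

lemma lex_app (C : List ℕ) : ∀ {A B : List ℕ}, List.Lex (· < ·) A B →
    (∀ c ∈ C, ∀ b ∈ B, c < b) → List.Lex (· < ·) (A ++ C) (B ++ C) := by
  intro A B hlex
  induction hlex with
  | @nil b B' =>
    intro h
    cases C with
    | nil => exact List.Lex.nil
    | cons c C' =>
      exact List.Lex.rel (h c List.mem_cons_self b List.mem_cons_self)
  | @rel a A' b B' hab => intro _; exact List.Lex.rel hab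
  | @cons a A' B' h' ih =>
    intro h
    exact List.Lex.cons (ih fun c hc b hb => h c hc b (List.mem_cons_of_mem _ hb))

lemma chain'_pairwise_idx (htopo : ∀ a b, E a b → idx a < idx b)
    {l : List V} (h : l.Chain' E) : l.Pairwise (fun a b => idx a < idx b) := by
  haveI : IsTrans V (fun a b : V => idx a < idx b) := ⟨fun a b c => lt_trans⟩
  exact List.isChain_iff_pairwise.mp (h.imp htopo)

/-- Gluing a prefix of a path with another path starting at `q` gives a path. -/
lemma extend_path (htopo : ∀ a b, E a b → idx a < idx b)
    {u q v : V} {L₁ L₂ T : List V}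
    (hP : IsPath E u v (L₁ ++ q :: L₂)) (hM : IsPath E q v (q :: T)) :
    IsPath E u v (L₁ ++ q :: T) := by
  obtain ⟨⟨-, hhead, -, hchain⟩, hnd⟩ := hP
  obtain ⟨⟨-, -, hlast, hchainM⟩, hndM⟩ := hM
  replace hchain := List.isChain_append.mp hchain
  obtain ⟨hc1, hc2, hlink⟩ := hchain
  have hpw := chain'_pairwise_idx htopo
    (List.isChain_append.mpr ⟨hc1, hc2, hlink⟩)
  rw [List.pairwise_append] at hpw
  have hL1lt : ∀ x ∈ L₁, idx x < idx q :=
    fun x hx => hpw.2.2 x hx q List.mem_cons_self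
  have hMge : ∀ y ∈ q :: T, idx q ≤ idx y := by
    intro y hy
    have := chain'_pairwise_idx htopo hchainM
    rcases List.mem_cons.mp hy with h | h
    · exact h ▸ le_refl _
    · exact le_of_lt ((List.pairwise_cons.mp this).1 y h)
  rw [List.nodup_append] at hnd
  refine ⟨⟨?_, ?_, ?_, ?_⟩, ?_⟩
  · simp
  · cases L₁ with
    | nil => simpa using hhead
    | cons a L₁' => simpa using (by simpa using hhead : some a = some u)
  · rw [List.getLast?_append_of_ne_nil _ (List.cons_ne_nil q T)]
    exact hlast
  · exact List.isChain_append.mpr ⟨hc1, hchainM, by simpa using hlink⟩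
  · rw [List.nodup_append]
    exact ⟨hnd.1, hndM, fun x hx y hy hxy =>
      absurd (hMge y hy) (not_le.mpr (hxy ▸ hL1lt x hx))⟩

end Aux

/-- In a finite DAG with a topological numbering `idx`, let `u ≠ v` with
`v` reachable from `u`, and let `q` be any vertex lying on the lexicographically-first
shortest path `P(u, v)` with `q ≠ v`. Then the suffix of `P(u, v)` starting at `q` equals
the lexicographically-first shortest path `P(q, v)`. -/
theorem stmt10 (V : Type) [Fintype V] (E : V → V → Prop) (w : V → V → ℝ)
    (idx : V → ℕ) (hinj : Function.Injective idx)
    (htopo : ∀ a b, E a b → idx a < idx b)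
    (u v : V) (huv : u ≠ v) (hr : Reaches E u v)
    (L : List V) (hL : IsLexFirstSP E w idx u v L)
    (q : V) (hqL : q ∈ L) (hqv : q ≠ v) :
    ∀ L₁ L₂ : List V, L = L₁ ++ q :: L₂ → IsLexFirstSP E w idx q v (q :: L₂) := by
  intro L₁ L₂ hsplit
  obtain ⟨⟨⟨hLne, hLhead, hLlast, hLchain⟩, hLnd⟩, hmin, hlexmin⟩ := hL
  subst hsplit
  have hc := List.isChain_append.mp hLchain
  obtain ⟨hc1, hc2, hlink⟩ := hc
  have hnd := List.nodup_append.mp hLnd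
  have hlast2 : (q :: L₂).getLast? = some v := by
    rw [List.getLast?_append_of_ne_nil _ (List.cons_ne_nil q L₂)] at hLlast
    exact hLlast
  have hpathS : IsPath E q v (q :: L₂) :=
    ⟨⟨List.cons_ne_nil q L₂, rfl, hlast2, hc2⟩, hnd.2.1⟩
  have hL1lt : ∀ x ∈ L₁, idx x < idx q := by
    have hpw := chain'_pairwise_idx htopo hLchain
    rw [List.pairwise_append] at hpw
    exact fun x hx => hpw.2.2 x hx q List.mem_cons_self
  have hext : ∀ M, IsPath E q v M →
      IsPath E u v (L₁ ++ M) ∧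
      walkWeight w (L₁ ++ M) = walkWeight w (L₁ ++ [q]) + walkWeight w M := by
    intro M hM
    obtain ⟨⟨hMne, hMhead, hMlast, hMchain⟩, hMnd⟩ := hM
    cases M with
    | nil => exact absurd rfl hMne
    | cons m T =>
      have hmq : m = q := by simpa using hMhead
      subst hmq
      refine ⟨extend_path htopo ⟨⟨hLne, hLhead, hLlast, hLchain⟩, hLnd⟩
        ⟨⟨hMne, hMhead, hMlast, hMchain⟩, hMnd⟩, ?_⟩
      exact walkWeight_split w L₁ m T
  have hwL : walkWeight w (L₁ ++ q :: L₂)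
      = walkWeight w (L₁ ++ [q]) + walkWeight w (q :: L₂) := walkWeight_split w L₁ q L₂
  refine ⟨hpathS, ?_, ?_⟩
  · intro M hM
    obtain ⟨hP, hw⟩ := hext M hM
    have := hmin (L₁ ++ M) hP
    rw [hwL, hw] at this
    linarith
  · intro M hM heq hlex
    obtain ⟨hP, hw⟩ := hext M hM
    have hweq : walkWeight w (L₁ ++ M) = walkWeight w (L₁ ++ q :: L₂) := by
      rw [hw, hwL, heq]
    refine hlexmin (L₁ ++ M) hP hweq ?_
    rw [List.reverse_append, List.reverse_append, List.map_append, List.map_append]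
    refine lex_app _ hlex ?_
    intro c hc b hb
    simp only [List.mem_map, List.mem_reverse] at hc hb
    obtain ⟨x, hx, rfl⟩ := hc
    obtain ⟨y, hy, rfl⟩ := hb
    have h1 : idx x < idx q := hL1lt x hx
    rcases List.mem_cons.mp hy with h | h
    · exact h ▸ h1
    · have hpw2 := chain'_pairwise_idx htopo hc2
      exact lt_trans h1 ((List.pairwise_cons.mp hpw2).1 y h)
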